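/- Let X be a Banach space with a basis (e_n) whose basis constant is λ ≥ 1, with biorthogonal functionals (e_n*). Let (b_n), (b_n*) be block bases of (e_n) and (e_n*) respectively with b_m*(b_n) = δ_{m,n}, and suppose for some C ≥ 1 that ‖∑ ξⱼ bⱼ‖ ≤ √C ‖∑ ξⱼ eⱼ‖ and ‖∑ ξⱼ bⱼ*‖ ≤ √C ‖∑ ξⱼ eⱼ*‖ for all finitely supported scalar sequences (ξⱼ). Then Y = closed span of (bⱼ) is complemented in X and P : X → Y, P(x) = ∑ b_n*(x) b_n, is a well-defined bounded projection with ‖P‖ ≤ λC. -/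

import Mathlib

open Filter Topology

private lemma sum_trunc' {V : Type*} [AddCommGroup V] [Module ℝ V]
    (c : ℕ →₀ ℝ) (M : ℕ) (v : ℕ → V) :
    ∑ j ∈ c.support.filter (· < M), c j • v j = ∑ n ∈ Finset.range M, c n • v n := by
  refine Finset.sum_subset ?_ ?_
  · intro j hj
    simp only [Finset.mem_filter] at hj
    exact Finset.mem_range.mpr hj.2
  · intro j hj hnj
    simp only [Finset.mem_filter, Finset.mem_range] at hj hnj
    have : c j = 0 := by
      by_contra h
      exact hnj ⟨Finsupp.mem_support_iff.mpr h, hj⟩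
    simp [this]

private lemma sum_supp_eq {V : Type*} [AddCommGroup V] [Module ℝ V]
    (c : ℕ →₀ ℝ) (M : ℕ) (hsupp : c.support ⊆ Finset.range M) (v : ℕ → V) :
    ∑ j ∈ c.support, c j • v j = ∑ n ∈ Finset.range M, c n • v n := by
  refine Finset.sum_subset hsupp ?_
  intro j _ hj
  simp [Finsupp.notMem_support_iff.mp hj]

/-- If `(b n)`, `(b* n)` are biorthogonal block bases of a basis `(e n)` (basis
constant `λ`) and its coordinate functionals `(e* n)`, dominated by `√C` times the
respective bases, then `Y = closed span (b n)` is complemented in `X`: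
`P x = ∑ b*ₙ(x) bₙ` is a well-defined bounded projection onto `Y` with `‖P‖ ≤ λC`. -/
theorem stmt_6 {X : Type*} [NormedAddCommGroup X] [NormedSpace ℝ X] [CompleteSpace X]
    (e : ℕ → X) (estar : ℕ → X →L[ℝ] ℝ)
    (hbie : ∀ i j, estar i (e j) = if i = j then 1 else 0)
    (hdense : (Submodule.span ℝ (Set.range e)).topologicalClosure = ⊤)
    (lam : ℝ) (hlam : 1 ≤ lam)
    (hbasis : ∀ (c : ℕ →₀ ℝ) (N : ℕ),
      ‖∑ j ∈ c.support.filter (· < N), c j • e j‖ ≤ lam * ‖∑ j ∈ c.support, c j • e j‖)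
    (b : ℕ → X) (bstar : ℕ → X →L[ℝ] ℝ)
    (hbne : ∀ n, b n ≠ 0) (hbstarne : ∀ n, bstar n ≠ 0)
    (hblockb : ∃ k : ℕ → ℕ, StrictMono k ∧
      ∀ n, b n ∈ Submodule.span ℝ (e '' Set.Ico (k n) (k (n + 1))))
    (hblockbstar : ∃ k : ℕ → ℕ, StrictMono k ∧
      ∀ n, bstar n ∈ Submodule.span ℝ (estar '' Set.Ico (k n) (k (n + 1))))
    (hbi : ∀ m n, bstar m (b n) = if m = n then 1 else 0)
    (C : ℝ) (hC : 1 ≤ C)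
    (hCb : ∀ c : ℕ →₀ ℝ,
      ‖∑ j ∈ c.support, c j • b j‖ ≤ Real.sqrt C * ‖∑ j ∈ c.support, c j • e j‖)
    (hCbstar : ∀ c : ℕ →₀ ℝ,
      ‖∑ j ∈ c.support, c j • bstar j‖ ≤ Real.sqrt C * ‖∑ j ∈ c.support, c j • estar j‖) :
    ∃ P : X →L[ℝ] X, ‖P‖ ≤ lam * C ∧ P.comp P = P ∧
      LinearMap.range (P : X →ₗ[ℝ] X) = (Submodule.span ℝ (Set.range b)).topologicalClosure ∧
      ∀ x : X, Tendsto (fun N => ∑ n ∈ Finset.range N, bstar n x • b n) atTop (𝓝 (P x)) := by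
  obtain ⟨κ, hκ, hκb⟩ := hblockbstar
  have hC0 : (0:ℝ) ≤ C := le_trans zero_le_one hC
  have hlam0 : (0:ℝ) ≤ lam := le_trans zero_le_one hlam
  have hsqrtC : Real.sqrt C * Real.sqrt C = C := Real.mul_self_sqrt hC0
  have hsqrt0 : (0:ℝ) ≤ Real.sqrt C := Real.sqrt_nonneg C
  have hlamC0 : (0:ℝ) ≤ lam * C := mul_nonneg hlam0 hC0
  -- partial sum operators
  set T : ℕ → X →L[ℝ] X := fun M => ∑ n ∈ Finset.range M, (bstar n).smulRight (b n) with hT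
  have hTapp : ∀ M x, T M x = ∑ n ∈ Finset.range M, bstar n x • b n := by
    intro M x
    simp [hT, ContinuousLinearMap.sum_apply]
  -- coordinate functionals pick out coefficients
  have hcoord : ∀ (c : ℕ →₀ ℝ) (n : ℕ), estar n (∑ j ∈ c.support, c j • e j) = c n := by
    intro c n
    rw [map_sum]
    have hterm : ∀ j ∈ c.support, estar n (c j • e j) = if j = n then c j else 0 := by
      intro j _
      rw [map_smul, hbie, smul_eq_mul]
      by_cases h : n = j
      · simp [h]
      · simp [h, Ne.symm h]
    rw [Finset.sum_congr rfl hterm, Finset.sum_ite_eq' c.support n fun j => c j]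
    by_cases h : n ∈ c.support
    · simp [h]
    · simp [h, Finsupp.notMem_support_iff.mp h]
  -- block functionals vanish on early basis vectors
  have hbstar_e : ∀ n j, j < κ n → bstar n (e j) = 0 := by
    intro n j hj
    refine Submodule.span_induction ?_ ?_ ?_ ?_ (hκb n)
    · rintro φ ⟨i, hi, rfl⟩
      simp only [Set.mem_Ico] at hi
      have : i ≠ j := by omega
      simp [hbie, this]
    · simp
    · intro φ ψ _ _ hφ hψ
      simp [hφ, hψ]
    · intro a φ _ hφ
      simp [hφ]
  -- uniform bound on partial sums
  have hTbound : ∀ M x, ‖T M x‖ ≤ lam * C * ‖x‖ := by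
    intro M x
    obtain ⟨f, hf1, hfx⟩ := exists_dual_vector'' ℝ (T M x)
    set g : X →L[ℝ] ℝ := ∑ n ∈ Finset.range M, f (b n) • bstar n with hg
    have hfx' : f (T M x) = ‖T M x‖ := by exact_mod_cast hfx
    have hgx : g x = ‖T M x‖ := by
      rw [← hfx', hTapp, map_sum]
      simp only [hg, ContinuousLinearMap.sum_apply, ContinuousLinearMap.smul_apply,
        map_smul, smul_eq_mul]
      exact Finset.sum_congr rfl fun n _ => mul_comm _ _
    -- the finsupp for coefficients f (b n), n < M
    set cf : ℕ →₀ ℝ := Finsupp.onFinset (Finset.range M)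
      (fun n => if n < M then f (b n) else 0)
      (by intro a h; by_contra hh; simp only [Finset.mem_range] at hh; simp [hh] at h) with hcf
    have hcfsupp : cf.support ⊆ Finset.range M := Finsupp.support_onFinset_subset
    have hcfval : ∀ n < M, cf n = f (b n) := by
      intro n hn; simp [hcf, Finsupp.onFinset_apply, hn]
    have hgeq : g = ∑ j ∈ cf.support, cf j • bstar j := by
      rw [Finset.sum_subset hcfsupp (fun j _ hj => by simp [Finsupp.notMem_support_iff.mp hj])]
      exact (Finset.sum_congr rfl fun n hn => by
        rw [hcfval n (Finset.mem_range.mp hn)]).symm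
    set h : X →L[ℝ] ℝ := ∑ j ∈ cf.support, cf j • estar j with hh
    have hgnorm : ‖g‖ ≤ Real.sqrt C * ‖h‖ := by
      rw [hgeq]; exact hCbstar cf
    have hheq : h = ∑ n ∈ Finset.range M, f (b n) • estar n := by
      rw [hh, Finset.sum_subset hcfsupp (fun j _ hj => by simp [Finsupp.notMem_support_iff.mp hj])]
      exact Finset.sum_congr rfl fun n hn => by
        rw [hcfval n (Finset.mem_range.mp hn)]
    -- bound ‖h‖ via density
    have hkey : ∀ y : X, ‖h y‖ ≤ Real.sqrt C * lam * ‖y‖ := by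
      have hclosed : IsClosed {y : X | ‖h y‖ ≤ Real.sqrt C * lam * ‖y‖} :=
        isClosed_le (continuous_norm.comp h.continuous)
          (continuous_const.mul continuous_norm)
      have hspan : ∀ y ∈ Submodule.span ℝ (Set.range e),
          ‖h y‖ ≤ Real.sqrt C * lam * ‖y‖ := by
        intro y hy
        obtain ⟨c, hcy⟩ := Finsupp.mem_span_range_iff_exists_finsupp.mp hy
        rw [Finsupp.sum] at hcy
        have hhy : h y = f (∑ n ∈ Finset.range M, c n • b n) := by
          rw [hheq, map_sum]
          simp only [ContinuousLinearMap.sum_apply, ContinuousLinearMap.smul_apply,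
            smul_eq_mul, map_smul]
          refine Finset.sum_congr rfl fun n _ => ?_
          rw [← hcy, hcoord c n, mul_comm]
        set c' : ℕ →₀ ℝ := Finsupp.filter (· < M) c with hc'
        have hc'supp : c'.support = c.support.filter (· < M) := by
          ext j
          by_cases h : j < M <;>
            simp [hc', Finsupp.mem_support_iff, Finsupp.filter_apply, Finset.mem_filter, h]
        have hc'b : ∑ j ∈ c'.support, c' j • b j = ∑ n ∈ Finset.range M, c n • b n := by
          rw [hc'supp, ← sum_trunc' c M b]
          refine Finset.sum_congr rfl fun j hj => ?_
          simp only [Finset.mem_filter] at hj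
          rw [hc', Finsupp.filter_apply, if_pos hj.2]
        have hc'e : ∑ j ∈ c'.support, c' j • e j = ∑ j ∈ c.support.filter (· < M), c j • e j := by
          rw [hc'supp]
          refine Finset.sum_congr rfl fun j hj => ?_
          simp only [Finset.mem_filter] at hj
          rw [hc', Finsupp.filter_apply, if_pos hj.2]
        calc ‖h y‖ = ‖f (∑ n ∈ Finset.range M, c n • b n)‖ := by rw [hhy]
          _ ≤ ‖f‖ * ‖∑ n ∈ Finset.range M, c n • b n‖ := f.le_opNorm _
          _ ≤ 1 * ‖∑ n ∈ Finset.range M, c n • b n‖ := by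
              exact mul_le_mul_of_nonneg_right hf1 (norm_nonneg _)
          _ = ‖∑ j ∈ c'.support, c' j • b j‖ := by rw [one_mul, hc'b]
          _ ≤ Real.sqrt C * ‖∑ j ∈ c'.support, c' j • e j‖ := hCb c'
          _ = Real.sqrt C * ‖∑ j ∈ c.support.filter (· < M), c j • e j‖ := by rw [hc'e]
          _ ≤ Real.sqrt C * (lam * ‖∑ j ∈ c.support, c j • e j‖) :=
              mul_le_mul_of_nonneg_left (hbasis c M) hsqrt0
          _ = Real.sqrt C * lam * ‖y‖ := by rw [hcy, mul_assoc]
      intro y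
      have hy : y ∈ closure ((Submodule.span ℝ (Set.range e) : Submodule ℝ X) : Set X) := by
        have := hdense
        rw [← Submodule.topologicalClosure_coe, this]
        trivial
      exact closure_minimal hspan hclosed hy
    have hhnorm : ‖h‖ ≤ Real.sqrt C * lam :=
      h.opNorm_le_bound (mul_nonneg hsqrt0 hlam0) fun y => hkey y
    have hgnorm2 : ‖g‖ ≤ lam * C := by
      calc ‖g‖ ≤ Real.sqrt C * ‖h‖ := hgnorm
        _ ≤ Real.sqrt C * (Real.sqrt C * lam) :=
            mul_le_mul_of_nonneg_left hhnorm hsqrt0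
        _ = lam * C := by rw [← mul_assoc, hsqrtC]; ring
    calc ‖T M x‖ = g x := hgx.symm
      _ ≤ ‖g x‖ := le_abs_self _
      _ ≤ ‖g‖ * ‖x‖ := g.le_opNorm x
      _ ≤ lam * C * ‖x‖ := mul_le_mul_of_nonneg_right hgnorm2 (norm_nonneg x)
  -- eventual stabilization on the span of e
  have hstab : ∀ y ∈ Submodule.span ℝ (Set.range e), ∃ K, ∀ M, K ≤ M → T M y = T K y := by
    intro y hy
    obtain ⟨c, hcy⟩ := Finsupp.mem_span_range_iff_exists_finsupp.mp hy
    rw [Finsupp.sum] at hcy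
    refine ⟨(c.support.sup id) + 1, fun M hM => ?_⟩
    set K := (c.support.sup id) + 1
    have hvan : ∀ n, K ≤ n → bstar n y = 0 := by
      intro n hn
      rw [← hcy, map_sum]
      refine Finset.sum_eq_zero fun j hj => ?_
      have hjK : j < K := Nat.lt_succ_of_le (Finset.le_sup (f := id) hj)
      have : j < κ n := lt_of_lt_of_le (lt_of_lt_of_le hjK hn) hκ.le_apply
      rw [map_smul, hbstar_e n j this, smul_zero]
    rw [hTapp, hTapp, ← Finset.sum_range_add_sum_Ico _ hM]
    have : ∑ n ∈ Finset.Ico K M, bstar n y • b n = 0 := by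
      refine Finset.sum_eq_zero fun n hn => ?_
      rw [hvan n (Finset.mem_Ico.mp hn).1, zero_smul]
    rw [this, add_zero]
  -- convergence for every x
  have hconv : ∀ x : X, ∃ z : X, Tendsto (fun M => T M x) atTop (𝓝 z) := by
    intro x
    refine cauchySeq_tendsto_of_complete ?_
    rw [Metric.cauchySeq_iff']
    intro ε hε
    have hxcl : x ∈ closure ((Submodule.span ℝ (Set.range e) : Submodule ℝ X) : Set X) := by
      rw [← Submodule.topologicalClosure_coe, hdense]; trivial
    have hδ : (0:ℝ) < ε / (2 * (lam * C) + 1) := by positivity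
    obtain ⟨y, hy, hxy⟩ := Metric.mem_closure_iff.mp hxcl _ hδ
    obtain ⟨K, hK⟩ := hstab y hy
    refine ⟨K, fun M hM => ?_⟩
    have h1 : ∀ N, ‖T N x - T N y‖ ≤ lam * C * ‖x - y‖ := by
      intro N
      rw [← map_sub]
      exact hTbound N (x - y)
    have hxynorm : ‖x - y‖ < ε / (2 * (lam * C) + 1) := by
      rwa [← dist_eq_norm]
    have key : ‖T M x - T K x‖ < ε := by
      have : T M x - T K x = (T M x - T M y) + (T K y - T K x) := by
        rw [hK M hM]; abel
      rw [this]
      calc ‖(T M x - T M y) + (T K y - T K x)‖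
          ≤ ‖T M x - T M y‖ + ‖T K y - T K x‖ := norm_add_le _ _
        _ ≤ lam * C * ‖x - y‖ + lam * C * ‖x - y‖ := by
            refine add_le_add (h1 M) ?_
            rw [norm_sub_rev]; exact h1 K
        _ = 2 * (lam * C) * ‖x - y‖ := by ring
        _ ≤ (2 * (lam * C) + 1) * ‖x - y‖ := by
            refine mul_le_mul_of_nonneg_right ?_ (norm_nonneg _); linarith
        _ < (2 * (lam * C) + 1) * (ε / (2 * (lam * C) + 1)) := by
            refine mul_lt_mul_of_pos_left hxynorm ?_; linarith
        _ = ε := by field_simp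
    rwa [dist_eq_norm]
  choose Pf hPf using hconv
  -- Pf is linear
  have hPadd : ∀ x y, Pf (x + y) = Pf x + Pf y := by
    intro x y
    refine tendsto_nhds_unique ?_ ((hPf x).add (hPf y))
    have : (fun M => T M (x + y)) = fun M => T M x + T M y := by
      funext M; rw [map_add]
    rw [← this]; exact hPf (x + y)
  have hPsmul : ∀ (a : ℝ) x, Pf (a • x) = a • Pf x := by
    intro a x
    refine tendsto_nhds_unique ?_ ((hPf x).const_smul a)
    have : (fun M => T M (a • x)) = fun M => a • T M x := by
      funext M; rw [map_smul]
    rw [← this]; exact hPf (a • x)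
  have hPbound : ∀ x, ‖Pf x‖ ≤ lam * C * ‖x‖ := by
    intro x
    refine le_of_tendsto (hPf x).norm (Eventually.of_forall fun M => hTbound M x)
  set Plin : X →ₗ[ℝ] X :=
    { toFun := Pf, map_add' := hPadd, map_smul' := hPsmul } with hPlin
  set P : X →L[ℝ] X := Plin.mkContinuous (lam * C) hPbound with hP
  have hPapp : ∀ x, P x = Pf x := fun x => rfl
  have hPnorm : ‖P‖ ≤ lam * C := Plin.mkContinuous_norm_le hlamC0 hPbound
  set Y := (Submodule.span ℝ (Set.range b)).topologicalClosure with hY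
  have hPmem : ∀ x, P x ∈ Y := by
    intro x
    have hcl : IsClosed (Y : Set X) := Submodule.isClosed_topologicalClosure _
    refine hcl.mem_of_tendsto (hPapp x ▸ hPf x) (Eventually.of_forall fun M => ?_)
    have : T M x ∈ Submodule.span ℝ (Set.range b) := by
      rw [hTapp]
      exact Submodule.sum_mem _ fun n _ =>
        Submodule.smul_mem _ _ (Submodule.subset_span (Set.mem_range_self n))
    exact (Submodule.le_topologicalClosure _) this
  have hPb : ∀ n, P (b n) = b n := by
    intro n
    have hTbn : ∀ M, n < M → T M (b n) = b n := by
      intro M hM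
      rw [hTapp]
      have : ∀ m ∈ Finset.range M, bstar m (b n) • b m = if m = n then b n else 0 := by
        intro m _
        rw [hbi m n]
        by_cases h : m = n
        · simp [h]
        · simp [h]
      rw [Finset.sum_congr rfl this, Finset.sum_ite_eq' (Finset.range M) n fun _ => b n,
        if_pos (Finset.mem_range.mpr hM)]
    have htend : Tendsto (fun M => T M (b n)) atTop (𝓝 (b n)) := by
      refine Tendsto.congr' ?_ tendsto_const_nhds
      filter_upwards [eventually_gt_atTop n] with M hM
      exact (hTbn M hM).symm
    rw [hPapp]
    exact tendsto_nhds_unique (hPf (b n)) htend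
  have hPfix : ∀ y ∈ Y, P y = y := by
    intro y hy
    have hclosed : IsClosed {z : X | P z = z} := isClosed_eq P.continuous continuous_id
    have hspan : ∀ z ∈ Submodule.span ℝ (Set.range b), P z = z := by
      intro z hz
      refine Submodule.span_induction ?_ ?_ ?_ ?_ hz
      · rintro w ⟨n, rfl⟩; exact hPb n
      · exact map_zero P
      · intro u v _ _ hu hv; rw [map_add, hu, hv]
      · intro a u _ hu; rw [map_smul, hu]
    have hy' : y ∈ closure ((Submodule.span ℝ (Set.range b) : Submodule ℝ X) : Set X) := by
      rw [← Submodule.topologicalClosure_coe]; exact hy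
    exact closure_minimal hspan hclosed hy'
  refine ⟨P, hPnorm, ?_, ?_, ?_⟩
  · ext x
    exact hPfix (P x) (hPmem x)
  · apply le_antisymm
    · rintro z ⟨x, rfl⟩
      exact hPmem x
    · intro z hz
      exact ⟨z, hPfix z hz⟩
  · intro x
    have := hPf x
    rw [← hPapp] at this
    convert this using 2
    rw [hTapp]
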